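/- Let σ ∈ S_t be a consecutive pattern (all adjacencies required) and p ∈ S_k a prefix pattern. If p_1 p_2 ⋯ p_{min(t,k)} is not order-isomorphic to σ_1 σ_2 ⋯ σ_{min(t,k)}, then deleting the first letter is a bijection between {π ∈ S_n : π avoids the consecutive pattern σ and the first k letters of π equal w} and {π' ∈ S_{n−1} : π' avoids the consecutive pattern σ and the first k−1 letters of π' equal d_1(w)}, for every prefix word w reducing to p. -/

import Mathlib

/-- A set of vincular patterns: each pattern is a length `k`, a permutation of `Fin k`,
and a set of adjacency positions `X ⊆ {1,...,k-1}` (1-based). -/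
abbrev PatSet := Set (Σ k : ℕ, Equiv.Perm (Fin k) × Finset ℕ)

/-- `π` contains the vincular pattern `(σ, X)`: there are strictly increasing positions
whose letters are order-isomorphic to `σ`, with positions `x` and `x+1` (1-based) adjacent
for each `x ∈ X`. -/
def ContainsV {n k : ℕ} (π : Equiv.Perm (Fin n)) (σ : Equiv.Perm (Fin k))
    (X : Finset ℕ) : Prop :=
  ∃ i : Fin k → Fin n, StrictMono i ∧
    (∀ a b : Fin k, π (i a) < π (i b) ↔ σ a < σ b) ∧
    (∀ x ∈ X, ∀ (hx : x < k) (hx' : x - 1 < k),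
      (i ⟨x, hx⟩ : ℕ) = (i ⟨x - 1, hx'⟩ : ℕ) + 1)

/-- The positions of the prefix indices `R` inside `Fin n`. -/
def prefIndices {n k : ℕ} (h : k ≤ n) (R : Finset (Fin k)) : Finset (Fin n) :=
  R.map (Fin.castLEEmb h)

/-- The deletion map `d_R`: delete the letters of `π` at the (prefix) positions in `R`
and reduce, yielding a permutation of length `n - |R|`. -/
def deletePerm {n k : ℕ} (h : k ≤ n) (R : Finset (Fin k)) (π : Equiv.Perm (Fin n)) :
    Equiv.Perm (Fin (n - R.card)) :=
  ((prefIndices h R)ᶜ.orderIsoOfFin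
      (by simp [prefIndices, Finset.card_compl])).toEquiv.trans
    ((π.subtypeEquiv (fun x => by
        simp [prefIndices, Finset.mem_compl, Finset.mem_image])).trans
      (((prefIndices h R).image π)ᶜ.orderIsoOfFin
        (by simp [prefIndices, Finset.card_compl,
              Finset.card_image_of_injective _ π.injective])).toEquiv.symm)

/-- The deletion map `d_R` on prefix words: delete the letters of `w` at positions in `R`
and renumber the remaining letters. -/
def deleteWord {n k : ℕ} (R : Finset (Fin k)) (w : Fin k → Fin n)
    (hw : Function.Injective w) (i : Fin (k - R.card)) : Fin (n - R.card) :=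
  ((R.image w)ᶜ.orderIsoOfFin
      (by simp [Finset.card_compl, Finset.card_image_of_injective _ hw])).symm
    ⟨w ((Rᶜ.orderIsoOfFin (by simp [Finset.card_compl])) i), by
      have h2 := ((Rᶜ.orderIsoOfFin (by simp [Finset.card_compl])) i).2
      simp only [Finset.mem_compl] at h2 ⊢
      simp only [Finset.mem_image, not_exists, not_and]
      intro a ha hae
      exact h2 (hw hae ▸ ha)⟩

/-! ### Auxiliary machinery -/

/-- The increasing map `Fin (n-1) → Fin n` skipping the value `a`. -/
def skip {n : ℕ} (a : Fin n) (i : Fin (n - 1)) : Fin n :=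
  if (i : ℕ) < a then ⟨i, by have := i.isLt; omega⟩ else ⟨i + 1, by have := i.isLt; omega⟩

lemma skip_strictMono {n : ℕ} (a : Fin n) : StrictMono (skip a) := by
  intro i j hij; simp only [skip]; split <;> split <;> simp only [Fin.mk_lt_mk] <;> omega

lemma skip_ne {n : ℕ} (a : Fin n) (i : Fin (n-1)) : skip a i ≠ a := by
  simp only [skip]; split <;> (intro hc; apply_fun (Fin.val) at hc; simp at hc; omega)

lemma skip_mem_compl {n : ℕ} (a : Fin n) (i : Fin (n-1)) :
    skip a i ∈ ({a} : Finset (Fin n))ᶜ := by simp [skip_ne]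

lemma skip_lt_iff {n : ℕ} (a : Fin n) {i j : Fin (n-1)} : skip a i < skip a j ↔ i < j :=
  (skip_strictMono a).lt_iff_lt

lemma skip_inj {n : ℕ} (a : Fin n) : Function.Injective (skip a) :=
  (skip_strictMono a).injective

lemma skip_zero_val {n : ℕ} (h0 : 0 < n) (i : Fin (n-1)) :
    ((skip ⟨0, h0⟩ i : Fin n) : ℕ) = (i : ℕ) + 1 := by simp [skip]

lemma skip_zero_eq {n : ℕ} (h0 : 0 < n) (j : Fin (n-1)) (x : Fin n)
    (hx : (x : ℕ) = (j : ℕ) + 1) : skip ⟨0, h0⟩ j = x :=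
  Fin.ext ((skip_zero_val h0 j).trans hx.symm)

lemma iso_apply' {m : ℕ} {s : Finset (Fin m)} {a : Fin m} (hs : s = {a})
    (pf : sᶜ.card = m - 1) (x : Fin (m-1)) :
    ((sᶜ.orderIsoOfFin pf) x : Fin m) = skip a x := by
  subst hs
  rw [Finset.coe_orderIsoOfFin_apply,
    ← Finset.orderEmbOfFin_unique pf (skip_mem_compl a) (skip_strictMono a)]

lemma iso_symm_apply' {m : ℕ} {s : Finset (Fin m)} {a : Fin m} (hs : s = {a})
    (pf : sᶜ.card = m - 1) (q : {x // x ∈ sᶜ}) :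
    skip a ((sᶜ.orderIsoOfFin pf).symm q) = (q : Fin m) := by
  subst hs
  rw [← iso_apply' rfl pf, OrderIso.apply_symm_apply]

/-- Master formula for `deletePerm` at `R = {0}`. -/
lemma master {n k : ℕ} (hk : 0 < k) (h : k ≤ n) (π : Equiv.Perm (Fin n)) (w0 : Fin n)
    (hπ0 : π (Fin.castLE h ⟨0, hk⟩) = w0) (i : Fin (n - 1)) :
    skip w0 (deletePerm h {(⟨0, hk⟩ : Fin k)} π i) = π (skip ⟨0, hk.trans_le h⟩ i) := by
  have hpre : prefIndices h ({(⟨0, hk⟩ : Fin k)} : Finset (Fin k))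
      = {(⟨0, hk.trans_le h⟩ : Fin n)} := by
    simp only [prefIndices, Finset.map_singleton]
    rfl
  have himg : (prefIndices h ({(⟨0, hk⟩ : Fin k)} : Finset (Fin k))).image π
      = {w0} := by
    rw [hpre, Finset.image_singleton, ← hπ0]
    rfl
  simp only [deletePerm]
  erw [Equiv.trans_apply, Equiv.trans_apply]
  simp only [Equiv.subtypeEquiv, OrderIso.toEquiv_symm,
    RelIso.coe_fn_toEquiv, Equiv.coe_fn_mk]
  exact (iso_symm_apply' himg (deletePerm._proof_3 h {⟨0, hk⟩} π) _).trans (congrArg π (iso_apply' hpre _ i))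

/-- Master formula for `deleteWord` at `R = {0}`. -/
lemma masterW {n k : ℕ} (hk : 0 < k) (h : k ≤ n) (w : Fin k → Fin n)
    (hw : Function.Injective w) (i : Fin (k - 1)) :
    skip (w ⟨0, hk⟩) (deleteWord {(⟨0, hk⟩ : Fin k)} w hw i) = w (skip ⟨0, hk⟩ i) := by
  simp only [deleteWord]
  exact (iso_symm_apply' (Finset.image_singleton w ⟨0, hk⟩) _ _).trans
    (congrArg w (iso_apply' rfl _ i))

/-- In a fully-consecutive occurrence, position `x` equals position `0` plus `x`. -/
lemma consec {t n : ℕ} {i : Fin t → Fin n}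
    (hadj : ∀ x ∈ Finset.Icc 1 (t-1), ∀ (hx : x < t) (hx' : x - 1 < t),
      (i ⟨x, hx⟩ : ℕ) = (i ⟨x - 1, hx'⟩ : ℕ) + 1)
    (x : ℕ) (hx : x < t) (h0 : 0 < t) :
    (i ⟨x, hx⟩ : ℕ) = (i ⟨0, h0⟩ : ℕ) + x := by
  induction x with
  | zero => rfl
  | succ m ih =>
    have hm : m < t := by omega
    have h1 : (i ⟨m + 1, hx⟩ : ℕ) = (i ⟨m, hm⟩ : ℕ) + 1 :=
      hadj (m+1) (by simp only [Finset.mem_Icc]; omega) hx hm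
    rw [h1, ih hm]
    omega

/-- Key equivalence: for a permutation with prefix `w`, containment of the consecutive
pattern `σ` is preserved by deleting the first letter. -/
lemma equivAvoid {t k n : ℕ} (σ : Equiv.Perm (Fin t)) (p : Equiv.Perm (Fin k))
    (hk : 0 < k) (h : k ≤ n) (ht : 0 < t)
    (hne : ¬ ∀ a b : Fin (min t k),
        p (Fin.castLE (min_le_right t k) a) < p (Fin.castLE (min_le_right t k) b) ↔
          σ (Fin.castLE (min_le_left t k) a) < σ (Fin.castLE (min_le_left t k) b))
    (w : Fin k → Fin n)
    (hiso : ∀ a b : Fin k, w a < w b ↔ p a < p b)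
    (π : Equiv.Perm (Fin n)) (hpre : ∀ j : Fin k, π (Fin.castLE h j) = w j) :
    ContainsV π σ (Finset.Icc 1 (t-1)) ↔
      ContainsV (deletePerm h {(⟨0, hk⟩ : Fin k)} π) σ (Finset.Icc 1 (t-1)) := by
  have hπ0 : π (Fin.castLE h ⟨0, hk⟩) = w ⟨0, hk⟩ := hpre _
  have hn0 : 0 < n := hk.trans_le h
  constructor
  · rintro ⟨i, hmono, hiso2, hadj⟩
    by_cases hs0 : (i ⟨0, ht⟩ : ℕ) = 0
    · exfalso
      apply hne
      have hkey : ∀ a : Fin (min t k),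
          π (i (Fin.castLE (min_le_left t k) a)) = w (Fin.castLE (min_le_right t k) a) := by
        intro a
        have hv : (i (Fin.castLE (min_le_left t k) a) : ℕ) = (i ⟨0, ht⟩ : ℕ) + a.1 :=
          consec hadj a.1 (lt_of_lt_of_le a.2 (min_le_left t k)) ht
        have he : i (Fin.castLE (min_le_left t k) a)
            = Fin.castLE h (Fin.castLE (min_le_right t k) a) := by
          apply Fin.ext
          rw [Fin.coe_castLE, Fin.coe_castLE]
          omega
        rw [he, hpre]
      intro a b
      rw [← hiso, ← hkey a, ← hkey b, hiso2]
    · have hge : ∀ a : Fin t, 1 ≤ (i a : ℕ) := by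
        intro a
        have h1 : i ⟨0, ht⟩ ≤ i a := hmono.monotone (by rw [Fin.le_def]; exact Nat.zero_le _)
        rw [Fin.le_def] at h1
        omega
      refine ⟨fun a => ⟨(i a : ℕ) - 1, by
          have := (i a).isLt
          have := hge a
          have hc : ({(⟨0, hk⟩ : Fin k)} : Finset (Fin k)).card = 1 := rfl
          omega⟩, ?_, ?_, ?_⟩
      · intro a b hab
        have h1 := hmono hab
        rw [Fin.lt_def] at h1 ⊢
        have := hge a
        simp only []
        omega
      · intro a b
        have hτ : ∀ c : Fin t,
            skip (w ⟨0, hk⟩) (deletePerm h {(⟨0, hk⟩ : Fin k)} π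
              ⟨(i c : ℕ) - 1, by
                have := (i c).isLt
                have := hge c
                have hc : ({(⟨0, hk⟩ : Fin k)} : Finset (Fin k)).card = 1 := rfl
                omega⟩) = π (i c) := by
          intro c
          refine (master hk h π (w ⟨0, hk⟩) hπ0 _).trans (congrArg π ?_)
          refine skip_zero_eq _ _ _ ?_
          show (i c : ℕ) = (i c : ℕ) - 1 + 1
          have := hge c
          omega
        rw [← hiso2 a b, ← hτ a, ← hτ b]; erw [skip_lt_iff]; exact Iff.rfl
      · intro x hx hxt hxt'
        simp only [Finset.mem_Icc] at hx
        have h1 := hadj x (by simp only [Finset.mem_Icc]; omega) hxt hxt'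
        have h2 := hge ⟨x - 1, hxt'⟩
        show (i ⟨x, hxt⟩ : ℕ) - 1 = (i ⟨x - 1, hxt'⟩ : ℕ) - 1 + 1
        omega
  · rintro ⟨i, hmono, hiso2, hadj⟩
    refine ⟨fun a => skip ⟨0, hn0⟩ (i a), (skip_strictMono _).comp hmono, ?_, ?_⟩
    · intro a b
      have hτ : ∀ c : Fin t,
          skip (w ⟨0, hk⟩) (deletePerm h {(⟨0, hk⟩ : Fin k)} π (i c))
            = π (skip ⟨0, hn0⟩ (i c)) := fun c => master hk h π (w ⟨0, hk⟩) hπ0 (i c)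
      rw [← hτ a, ← hτ b]; erw [skip_lt_iff, hiso2]
    · intro x hx hxt hxt'
      have h1 := hadj x hx hxt hxt'
      have h2 := skip_zero_val hn0 (i ⟨x, hxt⟩)
      have h3 := skip_zero_val hn0 (i ⟨x - 1, hxt'⟩)
      show ((skip ⟨0, hn0⟩ (i ⟨x, hxt⟩) : Fin n) : ℕ)
        = ((skip ⟨0, hn0⟩ (i ⟨x - 1, hxt'⟩) : Fin n) : ℕ) + 1
      omega

/-- If the first `min(t,k)` letters of `p` are not order-isomorphic to
`σ₁⋯σ_{min(t,k)}`, then deleting the first letter is a bijection between the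
`σ`-(consecutive-)avoiding permutations of length `n` with prefix word `w` and those of
length `n-1` with prefix word `d₁(w)`. -/
theorem stmt7 {t k n : ℕ} (σ : Equiv.Perm (Fin t)) (p : Equiv.Perm (Fin k))
    (hk : 0 < k) (h : k ≤ n)
    (hne : ¬ ∀ a b : Fin (min t k),
        p (Fin.castLE (min_le_right t k) a) < p (Fin.castLE (min_le_right t k) b) ↔
          σ (Fin.castLE (min_le_left t k) a) < σ (Fin.castLE (min_le_left t k) b))
    (w : Fin k → Fin n) (hw : Function.Injective w)
    (hiso : ∀ a b : Fin k, w a < w b ↔ p a < p b) :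
    Set.BijOn (deletePerm h {(⟨0, hk⟩ : Fin k)})
      {π : Equiv.Perm (Fin n) |
        ¬ ContainsV π σ (Finset.Icc 1 (t - 1)) ∧ ∀ i : Fin k, π (Fin.castLE h i) = w i}
      {τ : Equiv.Perm (Fin (n - ({(⟨0, hk⟩ : Fin k)} : Finset (Fin k)).card)) |
        ¬ ContainsV τ σ (Finset.Icc 1 (t - 1)) ∧
        ∀ i : Fin (k - ({(⟨0, hk⟩ : Fin k)} : Finset (Fin k)).card),
          τ (Fin.castLE (Nat.sub_le_sub_right h _) i) =
            deleteWord {(⟨0, hk⟩ : Fin k)} w hw i} := by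
  have ht : 0 < t := by
    by_contra ht
    apply hne
    intro a
    exact absurd a.isLt (by omega)
  have hn0 : 0 < n := hk.trans_le h
  refine ⟨?_, ?_, ?_⟩
  · -- MapsTo
    rintro π ⟨hav, hpre⟩
    refine ⟨fun hc => hav ((equivAvoid σ p hk h ht hne w hiso π hpre).mpr hc), ?_⟩
    intro i
    apply skip_inj (w ⟨0, hk⟩)
    have h1 : skip (w ⟨0, hk⟩)
        (deletePerm h {(⟨0, hk⟩ : Fin k)} π (Fin.castLE (Nat.sub_le_sub_right h _) i))
        = π (skip ⟨0, hn0⟩ (Fin.castLE (Nat.sub_le_sub_right h 1) i)) :=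
      master hk h π (w ⟨0, hk⟩) (hpre _) _
    rw [h1, masterW hk h w hw i]
    have h2 : skip ⟨0, hn0⟩ (Fin.castLE (Nat.sub_le_sub_right h 1) i)
        = Fin.castLE h (skip ⟨0, hk⟩ i) := by
      refine skip_zero_eq _ _ _ ?_
      rw [Fin.coe_castLE]; erw [Fin.coe_castLE]
      exact skip_zero_val hk i
    rw [h2, hpre]
  · -- InjOn
    rintro π₁ ⟨_, hpre₁⟩ π₂ ⟨_, hpre₂⟩ heq
    apply Equiv.ext
    intro x
    by_cases hx : (x : ℕ) = 0
    · have hxe : x = Fin.castLE h ⟨0, hk⟩ := Fin.ext hx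
      rw [hxe, hpre₁, hpre₂]
    · have hj : (x : ℕ) - 1 < n - 1 := by have := x.isLt; omega
      have hxe : x = skip ⟨0, hn0⟩ ⟨(x : ℕ) - 1, hj⟩ :=
        (skip_zero_eq hn0 ⟨(x : ℕ) - 1, hj⟩ x (by
          show (x : ℕ) = (x : ℕ) - 1 + 1
          omega)).symm
      have m1 : skip (w ⟨0, hk⟩) (deletePerm h {(⟨0, hk⟩ : Fin k)} π₁ ⟨(x : ℕ) - 1, hj⟩)
          = π₁ (skip ⟨0, hn0⟩ ⟨(x : ℕ) - 1, hj⟩) := master hk h π₁ (w ⟨0, hk⟩) (hpre₁ _) _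
      have m2 : skip (w ⟨0, hk⟩) (deletePerm h {(⟨0, hk⟩ : Fin k)} π₂ ⟨(x : ℕ) - 1, hj⟩)
          = π₂ (skip ⟨0, hn0⟩ ⟨(x : ℕ) - 1, hj⟩) := master hk h π₂ (w ⟨0, hk⟩) (hpre₂ _) _
      rw [hxe, ← m1, ← m2, heq]
  · -- SurjOn
    rintro τ ⟨hτav, hτpre⟩
    classical
    let f : Fin n → Fin n := fun x =>
      if hx : (x : ℕ) = 0 then w ⟨0, hk⟩
      else skip (w ⟨0, hk⟩) (τ ⟨(x : ℕ) - 1, by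
        have := x.isLt
        have hc : ({(⟨0, hk⟩ : Fin k)} : Finset (Fin k)).card = 1 := rfl
        omega⟩)
    have hfinj : Function.Injective f := by
      intro x y hxy
      by_cases hx : (x : ℕ) = 0 <;> by_cases hy : (y : ℕ) = 0
      · exact Fin.ext (hx.trans hy.symm)
      · exfalso
        simp only [f, dif_pos hx, dif_neg hy] at hxy
        exact skip_ne _ _ hxy.symm
      · exfalso
        simp only [f, dif_neg hx, dif_pos hy] at hxy
        exact skip_ne _ _ hxy
      · simp only [f, dif_neg hx, dif_neg hy] at hxy
        have h1 := τ.injective (skip_inj _ hxy)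
        have h2 : (x : ℕ) - 1 = (y : ℕ) - 1 := congrArg Fin.val h1
        exact Fin.ext (by omega)
    let π : Equiv.Perm (Fin n) := Equiv.ofBijective f (Finite.injective_iff_bijective.mp hfinj)
    have hπ : ∀ x, π x = f x := fun _ => rfl
    have hπpre : ∀ j : Fin k, π (Fin.castLE h j) = w j := by
      intro j
      rcases Nat.eq_zero_or_pos j.1 with hj | hj
      · have hje : j = ⟨0, hk⟩ := Fin.ext hj
        rw [hπ, hje]
        exact dif_pos rfl
      · rw [hπ]
        have hne0 : ((Fin.castLE h j : Fin n) : ℕ) ≠ 0 := by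
          rw [Fin.coe_castLE]; omega
        have hstep : f (Fin.castLE h j) = skip (w ⟨0, hk⟩)
            (τ ⟨((Fin.castLE h j : Fin n) : ℕ) - 1, by
              have := (Fin.castLE h j : Fin n).isLt
              have hc : ({(⟨0, hk⟩ : Fin k)} : Finset (Fin k)).card = 1 := rfl
              omega⟩) := dif_neg hne0
        rw [hstep]
        have hc1 : ({(⟨0, hk⟩ : Fin k)} : Finset (Fin k)).card = 1 := rfl
        have h2 : τ ⟨((Fin.castLE h j : Fin n) : ℕ) - 1, by
              have := (Fin.castLE h j : Fin n).isLt
              have hc : ({(⟨0, hk⟩ : Fin k)} : Finset (Fin k)).card = 1 := rfl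
              omega⟩
            = deleteWord {(⟨0, hk⟩ : Fin k)} w hw ⟨j.1 - 1, by
              have := j.isLt
              have hc : ({(⟨0, hk⟩ : Fin k)} : Finset (Fin k)).card = 1 := rfl
              omega⟩ :=
          hτpre ⟨j.1 - 1, by
            have := j.isLt
            have hc : ({(⟨0, hk⟩ : Fin k)} : Finset (Fin k)).card = 1 := rfl
            omega⟩
        rw [h2]; erw [masterW hk h w hw]
        refine congrArg w ?_
        refine skip_zero_eq _ _ _ ?_
        show (j : ℕ) = j.1 - 1 + 1
        omega
    have hdel : deletePerm h {(⟨0, hk⟩ : Fin k)} π = τ := by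
      apply Equiv.ext
      intro i
      apply skip_inj (w ⟨0, hk⟩)
      rw [master hk h π (w ⟨0, hk⟩) (hπpre _) i, hπ]
      have hne0 : ((skip ⟨0, hn0⟩ i : Fin n) : ℕ) ≠ 0 := by
        erw [skip_zero_val]; omega
      have hstep : f (skip ⟨0, hn0⟩ i) = skip (w ⟨0, hk⟩)
          (τ ⟨((skip ⟨0, hn0⟩ i : Fin n) : ℕ) - 1, by
            have := (skip ⟨0, hn0⟩ i : Fin n).isLt
            have hc : ({(⟨0, hk⟩ : Fin k)} : Finset (Fin k)).card = 1 := rfl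
            omega⟩) := dif_neg hne0
      rw [hstep]
      refine congrArg (skip (w ⟨0, hk⟩)) (congrArg τ (Fin.ext ?_))
      show (skip ⟨0, hn0⟩ i : Fin n).val - 1 = (i : ℕ)
      have := skip_zero_val hn0 i
      omega
    refine ⟨π, ⟨?_, hπpre⟩, hdel⟩
    rw [equivAvoid σ p hk h ht hne w hiso π hπpre, hdel]
    exact hτav
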